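/- arXiv:2406.05825 — 2 statements merged into one kernel-verified Lean document; each statement's English description precedes it below -/
import Mathlib

section
/- Let T = S(d_1,…,d_k) be a spider that is not a caterpillar (i.e., at least three of the d_i are at least 2). Then the set S of all internal (non-leaf) vertices of T is a multicover of T, and |S| = Σ_{m=1}^{k} (d_m − 1) + 1. -/
variable {V : Type*}

/-- The eccentricity of a vertex: the maximum distance to any vertex. -/
noncomputable def ecc (G : SimpleGraph V) [Fintype V] (v : V) : ℕ :=
  Finset.univ.sup (fun u => G.dist u v)

/-- A broadcast on `G`: a function assigning each vertex a power at most its eccentricity. -/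
def IsBroadcast (G : SimpleGraph V) [Fintype V] (f : V → ℕ) : Prop :=
  ∀ v, f v ≤ ecc G v

/-- `u` hears the broadcasting vertex `v`. -/
def Hears (G : SimpleGraph V) (f : V → ℕ) (u v : V) : Prop :=
  0 < f v ∧ G.dist u v ≤ f v

/-- An independent broadcast: no broadcasting vertex hears another vertex. -/
def IsIndepBroadcast (G : SimpleGraph V) [Fintype V] (f : V → ℕ) : Prop :=
  IsBroadcast G f ∧ ∀ v w, 0 < f v → v ≠ w → ¬ Hears G f v w

/-- The broadcast independence number: the maximum weight of an independent broadcast. -/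
noncomputable def alphaB (G : SimpleGraph V) [Fintype V] : ℕ :=
  sSup {w | ∃ f, IsIndepBroadcast G f ∧ w = ∑ v, f v}

/-- A packing broadcast: every vertex hears at most one broadcasting vertex. -/
def IsPackingBroadcast (G : SimpleGraph V) [Fintype V] (f : V → ℕ) : Prop :=
  IsBroadcast G f ∧ ∀ u : V, {v | Hears G f u v}.Subsingleton

/-- The broadcast packing number: the maximum weight of a packing broadcast. -/
noncomputable def Pb (G : SimpleGraph V) [Fintype V] : ℕ :=
  sSup {w | ∃ f, IsPackingBroadcast G f ∧ w = ∑ v, f v}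

/-- A multicover: a set of vertices such that every ball of radius `r` (with
`1 ≤ r ≤ ecc v`) contains at least `r` of its elements. -/
def IsMulticover (G : SimpleGraph V) [Fintype V] (S : Finset V) : Prop :=
  ∀ v : V, ∀ r : ℕ, 1 ≤ r → r ≤ ecc G v → r ≤ (S.filter (fun u => G.dist u v ≤ r)).card

/-- The multicover number: the minimum cardinality of a multicover. -/
noncomputable def Mc (G : SimpleGraph V) [Fintype V] : ℕ :=
  sInf {n | ∃ S : Finset V, IsMulticover G S ∧ n = S.card}


/-- Vertices of the spider `S(d 0, …, d (k-1))`: `none` is the branch vertex `u`, and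
`some ⟨i, j⟩` is the vertex at distance `j + 1` from `u` on the `i`-th branch. -/
abbrev SpiderVert (k : ℕ) (d : Fin k → ℕ) : Type := Option (Σ i : Fin k, Fin (d i))

/-- The spider `S(d 0, …, d (k-1))`: the tree obtained from the star `K_{1,k}` with
center `u` by subdividing edges so that the `i`-th leaf is at distance `d i` from `u`. -/
def spider (k : ℕ) (d : Fin k → ℕ) : SimpleGraph (SpiderVert k d) where
  Adj x y :=
    match x, y with
    | none, none => False
    | none, some ⟨_, j⟩ => (j : ℕ) = 0
    | some ⟨_, j⟩, none => (j : ℕ) = 0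
    | some ⟨i, j⟩, some ⟨i', j'⟩ =>
        (i : ℕ) = (i' : ℕ) ∧ ((j : ℕ) + 1 = (j' : ℕ) ∨ (j' : ℕ) + 1 = (j : ℕ))
  symm := by
    constructor
    rintro (_ | ⟨i, j⟩) (_ | ⟨i', j'⟩) hxy <;> simp_all <;> omega
  loopless := by
    constructor
    rintro (_ | ⟨i, j⟩) hxy <;> simp_all

/-- The `i`-th leaf of the spider, at distance `d i` from the branch vertex. -/
def spiderLeaf (k : ℕ) (d : Fin k → ℕ) (hd : ∀ i, 1 ≤ d i) (i : Fin k) : SpiderVert k d :=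
  some ⟨i, ⟨d i - 1, by have := hd i; omega⟩⟩

/-- A leaf of the spider: the end vertex of a branch. -/
def IsSpiderLeaf (k : ℕ) (d : Fin k → ℕ) : SpiderVert k d → Prop
  | none => False
  | some ⟨i, j⟩ => (j : ℕ) + 1 = d i

instance (k : ℕ) (d : Fin k → ℕ) : DecidablePred (IsSpiderLeaf k d) := fun v =>
  match v with
  | none => isFalse id
  | some ⟨i, j⟩ => Nat.decEq ((j : ℕ) + 1) (d i)


variable {k : ℕ} {d : Fin k → ℕ}

lemma spider_adj_zero (i : Fin k) (h : 0 < d i) :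
    (spider k d).Adj (some ⟨i, ⟨0, h⟩⟩) none := rfl

lemma spider_adj_up (i : Fin k) (j : ℕ) (h : j + 1 < d i) :
    (spider k d).Adj (some ⟨i, ⟨j + 1, h⟩⟩) (some ⟨i, ⟨j, by omega⟩⟩) :=
  ⟨rfl, Or.inr rfl⟩

lemma spider_reach_none (i : Fin k) (j : ℕ) (h : j < d i) :
    (spider k d).Reachable (some ⟨i, ⟨j, h⟩⟩) none := by
  induction j with
  | zero => exact (spider_adj_zero i h).reachable
  | succ n ih => exact ((spider_adj_up i n h).reachable).trans (ih (by omega))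

lemma spider_connected : (spider k d).Connected := by
  rw [SimpleGraph.connected_iff_exists_forall_reachable]
  refine ⟨none, ?_⟩
  rintro (_ | ⟨i, j⟩)
  · exact SimpleGraph.Reachable.refl _
  · exact (spider_reach_none i j.1 j.2).symm

lemma spider_dist_up (i : Fin k) (j : ℕ) (h : j < d i) :
    (spider k d).dist (some ⟨i, ⟨j, h⟩⟩) none ≤ j + 1 := by
  induction j with
  | zero => exact SimpleGraph.dist_le (spider_adj_zero i h).toWalk
  | succ n ih =>
    calc (spider k d).dist (some ⟨i, ⟨n+1, h⟩⟩) none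
        ≤ (spider k d).dist (some ⟨i, ⟨n+1, h⟩⟩) (some ⟨i, ⟨n, by omega⟩⟩)
          + (spider k d).dist (some ⟨i, ⟨n, by omega⟩⟩) none :=
          spider_connected.dist_triangle
      _ ≤ 1 + (n + 1) := by
          have : (spider k d).dist (some ⟨i, ⟨n+1, h⟩⟩) (some ⟨i, ⟨n, by omega⟩⟩) ≤ 1 := by simpa using SimpleGraph.dist_le (spider_adj_up i n h).toWalk
          have := ih (by omega)
          omega
      _ = n + 1 + 1 := by omega

lemma spider_dist_seg (i : Fin k) (j j' : ℕ) (h : j < d i) (h' : j' ≤ j) :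
    (spider k d).dist (some ⟨i, ⟨j, h⟩⟩) (some ⟨i, ⟨j', by omega⟩⟩) ≤ j - j' := by
  induction j with
  | zero =>
    have : j' = 0 := by omega
    subst this
    simp
  | succ n ih =>
    rcases Nat.eq_or_lt_of_le h' with he | hlt
    · subst he; simp
    · have h2 : j' ≤ n := by omega
      calc (spider k d).dist (some ⟨i, ⟨n+1, h⟩⟩) (some ⟨i, ⟨j', by omega⟩⟩)
          ≤ (spider k d).dist (some ⟨i, ⟨n+1, h⟩⟩) (some ⟨i, ⟨n, by omega⟩⟩)
            + (spider k d).dist (some ⟨i, ⟨n, by omega⟩⟩) (some ⟨i, ⟨j', by omega⟩⟩) :=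
            spider_connected.dist_triangle
        _ ≤ 1 + (n - j') := by
            have : (spider k d).dist (some ⟨i, ⟨n+1, h⟩⟩) (some ⟨i, ⟨n, by omega⟩⟩) ≤ 1 := by simpa using SimpleGraph.dist_le (spider_adj_up i n h).toWalk
            have := ih (by omega) h2
            omega
        _ ≤ n + 1 - j' := by omega

lemma spider_dist_none (i : Fin k) (j : ℕ) (h : j < d i) :
    (spider k d).dist none (some ⟨i, ⟨j, h⟩⟩) ≤ j + 1 := by
  rw [SimpleGraph.dist_comm]; exact spider_dist_up i j h

lemma spider_dist_cross (i i' : Fin k) (j j' : ℕ) (h : j < d i) (h' : j' < d i') :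
    (spider k d).dist (some ⟨i', ⟨j', h'⟩⟩) (some ⟨i, ⟨j, h⟩⟩) ≤ (j' + 1) + (j + 1) :=
  le_trans spider_connected.dist_triangle
    (Nat.add_le_add (spider_dist_up i' j' h') (spider_dist_none i j h))

lemma spider_top3 (hk : 3 ≤ k) (hmono : Monotone d)
    (hnc : 3 ≤ (Finset.univ.filter (fun i : Fin k => 2 ≤ d i)).card) :
    2 ≤ d ⟨k - 3, by omega⟩ := by
  by_contra hcon
  have hsub : (Finset.univ.filter (fun i : Fin k => 2 ≤ d i)) ⊆
      {⟨k - 2, by omega⟩, ⟨k - 1, by omega⟩} := by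
    intro i hi
    simp only [Finset.mem_filter, Finset.mem_univ, true_and] at hi
    by_cases hle : (i : ℕ) ≤ k - 3
    · have : d i ≤ d ⟨k - 3, by omega⟩ := hmono (by simpa [Fin.le_def] using hle)
      omega
    · have hi2 := i.2
      simp only [Finset.mem_insert, Finset.mem_singleton, Fin.ext_iff]
      omega
  have h2 := Finset.card_le_card hsub
  have h3 : ({⟨k - 2, by omega⟩, ⟨k - 1, by omega⟩} : Finset (Fin k)).card ≤ 2 :=
    le_trans (Finset.card_insert_le _ _) (by simp)
  omega

/-- Branch index discriminator (`k` for the center). -/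
def brIdx : SpiderVert k d → ℕ
  | none => k
  | some a => a.1

/-- Position discriminator. -/
def brVal : SpiderVert k d → ℕ
  | none => 0
  | some a => (a.2 : ℕ)

@[simp] lemma brIdx_none : brIdx (none : SpiderVert k d) = k := rfl
@[simp] lemma brIdx_some (a : Σ i : Fin k, Fin (d i)) : brIdx (some a) = a.1 := rfl
@[simp] lemma brVal_none : brVal (none : SpiderVert k d) = 0 := rfl
@[simp] lemma brVal_some (a : Σ i : Fin k, Fin (d i)) : brVal (some a) = (a.2 : ℕ) := rfl


lemma spider_card_ge {α : Type*} (S : Finset α) (g : ℕ → α) (r : ℕ)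
    (hmem : ∀ t, t < r → g t ∈ S)
    (hinj : ∀ t t', t < r → t' < r → g t = g t' → t = t') : r ≤ S.card := by
  refine le_trans (le_of_eq (Finset.card_range r).symm)
    (Finset.card_le_card_of_injOn g ?_ ?_)
  · intro a ha
    exact hmem a (Finset.mem_range.mp ha)
  · intro a ha b hb h
    exact hinj a b (by simpa using ha) (by simpa using hb) h

section CountLemmas

variable {k : ℕ} {d : Fin k → ℕ}

lemma count_none (L : Fin k) (r : ℕ) (hdL : 1 ≤ d L) (hrd : r ≤ d L) :
    r ≤ (((Finset.univ : Finset (SpiderVert k d)).filter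
        (fun v => ¬ IsSpiderLeaf k d v)).filter
      (fun u => (spider k d).dist u (none : SpiderVert k d) ≤ r)).card := by
  set g : ℕ → SpiderVert k d := fun t => if t = 0 then none else
    some ⟨L, ⟨min (t - 1) (d L - 1), by omega⟩⟩ with hg
  have hred : ∀ s : ℕ,
      (s = 0 ∧ g s = none) ∨
      (0 < s ∧ g s = some ⟨L, ⟨min (s - 1) (d L - 1), by omega⟩⟩) := by
    intro s
    by_cases h0 : s = 0
    · exact Or.inl ⟨h0, by simp only [hg]; rw [if_pos h0]⟩
    · exact Or.inr ⟨by omega, by simp only [hg]; rw [if_neg h0]⟩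
  apply spider_card_ge _ g r
  · intro t ht
    simp only [Finset.mem_filter, Finset.mem_univ, true_and]
    rcases hred t with ⟨hc, he⟩ | ⟨hc, he⟩ <;> rw [he]
    · exact ⟨fun h => h, by simp [SimpleGraph.dist_self]⟩
    · constructor
      · intro hlf
        have hlf' : min (t - 1) (d L - 1) + 1 = d L := hlf
        omega
      · exact le_trans (spider_dist_up _ _ _) (by omega)
  · intro t t' ht ht' h
    rcases hred t with ⟨hc1, he1⟩ | ⟨hc1, he1⟩ <;>
      rcases hred t' with ⟨hc2, he2⟩ | ⟨hc2, he2⟩ <;>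
      rw [he1, he2] at h <;>
      first
      | omega
      | (have hb := congrArg brIdx h
         have hv := congrArg brVal h
         simp only [brIdx_none, brIdx_some, brVal_none, brVal_some] at hb hv
         omega)

lemma count_A (i : Fin k) (J r : ℕ) (hJ : J < d i) (hr1 : 1 ≤ r) (hA : r ≤ J + 1) :
    r ≤ (((Finset.univ : Finset (SpiderVert k d)).filter
        (fun v => ¬ IsSpiderLeaf k d v)).filter
      (fun u => (spider k d).dist u (some ⟨i, ⟨J, hJ⟩⟩) ≤ r)).card := by
  set g : ℕ → SpiderVert k d := fun t =>
    if t = J then none else some ⟨i, ⟨J - 1 - t, by omega⟩⟩ with hg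
  have hred : ∀ s : ℕ,
      (s = J ∧ g s = none) ∨
      (s ≠ J ∧ g s = some ⟨i, ⟨J - 1 - s, by omega⟩⟩) := by
    intro s
    by_cases h0 : s = J
    · exact Or.inl ⟨h0, by simp only [hg]; rw [if_pos h0]⟩
    · exact Or.inr ⟨h0, by simp only [hg]; rw [if_neg h0]⟩
  apply spider_card_ge _ g r
  · intro t ht
    simp only [Finset.mem_filter, Finset.mem_univ, true_and]
    rcases hred t with ⟨hc, he⟩ | ⟨hc, he⟩ <;> rw [he]
    · exact ⟨fun h => h, le_trans (spider_dist_none i J hJ) (by omega)⟩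
    · have htJ : t < J := by omega
      constructor
      · intro hlf
        have hlf' : (J - 1 - t) + 1 = d i := hlf
        omega
      · rw [SimpleGraph.dist_comm]
        exact le_trans (spider_dist_seg i J (J - 1 - t) hJ (by omega)) (by omega)
  · intro t t' ht ht' h
    rcases hred t with ⟨hc1, he1⟩ | ⟨hc1, he1⟩ <;>
      rcases hred t' with ⟨hc2, he2⟩ | ⟨hc2, he2⟩ <;>
      rw [he1, he2] at h <;>
      first
      | omega
      | (have hb := congrArg brIdx h
         have hv := congrArg brVal h
         simp only [brIdx_none, brIdx_some, brVal_none, brVal_some] at hb hv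
         omega)

lemma count_B1 (i : Fin k) (J r : ℕ) (hJ : J < d i) (h2 : J + 2 ≤ r)
    (hB : r + J ≤ d i - 1) :
    r ≤ (((Finset.univ : Finset (SpiderVert k d)).filter
        (fun v => ¬ IsSpiderLeaf k d v)).filter
      (fun u => (spider k d).dist u (some ⟨i, ⟨J, hJ⟩⟩) ≤ r)).card := by
  set g : ℕ → SpiderVert k d := fun t =>
    if t < J then some ⟨i, ⟨J - 1 - t, by omega⟩⟩
    else if t = J then none
    else some ⟨i, ⟨min t (d i - 1), by omega⟩⟩ with hg
  have hred : ∀ s : ℕ,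
      (s < J ∧ g s = some ⟨i, ⟨J - 1 - s, by omega⟩⟩) ∨
      (s = J ∧ g s = none) ∨
      (J < s ∧ g s = some ⟨i, ⟨min s (d i - 1), by omega⟩⟩) := by
    intro s
    by_cases h1 : s < J
    · exact Or.inl ⟨h1, by simp only [hg]; rw [if_pos h1]⟩
    · by_cases h2 : s = J
      · exact Or.inr (Or.inl ⟨h2, by simp only [hg]; rw [if_neg h1, if_pos h2]⟩)
      · exact Or.inr (Or.inr ⟨by omega, by simp only [hg]; rw [if_neg h1, if_neg h2]⟩)
  apply spider_card_ge _ g r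
  · intro t ht
    simp only [Finset.mem_filter, Finset.mem_univ, true_and]
    rcases hred t with ⟨hc, he⟩ | ⟨hc, he⟩ | ⟨hc, he⟩ <;> rw [he]
    · constructor
      · intro hlf
        have hlf' : (J - 1 - t) + 1 = d i := hlf
        omega
      · rw [SimpleGraph.dist_comm]
        exact le_trans (spider_dist_seg i J (J - 1 - t) hJ (by omega)) (by omega)
    · exact ⟨fun h => h, le_trans (spider_dist_none i J hJ) (by omega)⟩
    · constructor
      · intro hlf
        have hlf' : min t (d i - 1) + 1 = d i := hlf
        omega
      · exact le_trans (spider_dist_seg i (min t (d i - 1)) J (by omega) (by omega))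
          (by omega)
  · intro t t' ht ht' h
    rcases hred t with ⟨hc1, he1⟩ | ⟨hc1, he1⟩ | ⟨hc1, he1⟩ <;>
      rcases hred t' with ⟨hc2, he2⟩ | ⟨hc2, he2⟩ | ⟨hc2, he2⟩ <;>
      rw [he1, he2] at h <;>
      first
      | omega
      | (have hb := congrArg brIdx h
         have hv := congrArg brVal h
         simp only [brIdx_none, brIdx_some, brVal_none, brVal_some] at hb hv
         omega)

lemma count_B2leaf (i i₁ i₂ : Fin k) (J r : ℕ) (hJ : J < d i) (h2 : J + 2 ≤ r)
    (hrB : r ≤ J + 1 + d i₁) (hd1 : 2 ≤ d i₁) (hd2 : 2 ≤ d i₂)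
    (hi1 : (i₁ : ℕ) ≠ (i : ℕ)) (hi2 : (i₂ : ℕ) ≠ (i : ℕ)) (hi12 : (i₂ : ℕ) ≠ (i₁ : ℕ)) :
    r ≤ (((Finset.univ : Finset (SpiderVert k d)).filter
        (fun v => ¬ IsSpiderLeaf k d v)).filter
      (fun u => (spider k d).dist u (some ⟨i, ⟨J, hJ⟩⟩) ≤ r)).card := by
  set g : ℕ → SpiderVert k d := fun t =>
    if t < J then some ⟨i, ⟨J - 1 - t, by omega⟩⟩
    else if t = J then none
    else if t ≤ J + (d i₁ - 1) then
      some ⟨i₁, ⟨min (t - J - 1) (d i₁ - 1), by omega⟩⟩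
    else some ⟨i₂, ⟨0, by omega⟩⟩ with hg
  have hred : ∀ s : ℕ,
      (s < J ∧ g s = some ⟨i, ⟨J - 1 - s, by omega⟩⟩) ∨
      (s = J ∧ g s = none) ∨
      (J < s ∧ s ≤ J + (d i₁ - 1) ∧
        g s = some ⟨i₁, ⟨min (s - J - 1) (d i₁ - 1), by omega⟩⟩) ∨
      (J + (d i₁ - 1) < s ∧ g s = some ⟨i₂, ⟨0, by omega⟩⟩) := by
    intro s
    by_cases h1 : s < J
    · exact Or.inl ⟨h1, by simp only [hg]; rw [if_pos h1]⟩
    · by_cases hs2 : s = J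
      · exact Or.inr (Or.inl ⟨hs2, by simp only [hg]; rw [if_neg h1, if_pos hs2]⟩)
      · by_cases h3 : s ≤ J + (d i₁ - 1)
        · exact Or.inr (Or.inr (Or.inl ⟨by omega, h3,
            by simp only [hg]; rw [if_neg h1, if_neg hs2, if_pos h3]⟩))
        · exact Or.inr (Or.inr (Or.inr ⟨by omega,
            by simp only [hg]; rw [if_neg h1, if_neg hs2, if_neg h3]⟩))
  apply spider_card_ge _ g r
  · intro t ht
    simp only [Finset.mem_filter, Finset.mem_univ, true_and]
    rcases hred t with ⟨hc, he⟩ | ⟨hc, he⟩ | ⟨hc, hc', he⟩ | ⟨hc, he⟩ <;> rw [he]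
    · constructor
      · intro hlf
        have hlf' : (J - 1 - t) + 1 = d i := hlf
        omega
      · rw [SimpleGraph.dist_comm]
        exact le_trans (spider_dist_seg i J (J - 1 - t) hJ (by omega)) (by omega)
    · exact ⟨fun h => h, le_trans (spider_dist_none i J hJ) (by omega)⟩
    · constructor
      · intro hlf
        have hlf' : min (t - J - 1) (d i₁ - 1) + 1 = d i₁ := hlf
        omega
      · exact le_trans
          (spider_dist_cross i i₁ J (min (t - J - 1) (d i₁ - 1)) hJ (by omega))
          (by omega)
    · constructor
      · intro hlf
        have hlf' : (0 : ℕ) + 1 = d i₂ := hlf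
        omega
      · exact le_trans (spider_dist_cross i i₂ J 0 hJ (by omega)) (by omega)
  · intro t t' ht ht' h
    rcases hred t with ⟨hc1, he1⟩ | ⟨hc1, he1⟩ | ⟨hc1, hc1', he1⟩ | ⟨hc1, he1⟩ <;>
      rcases hred t' with ⟨hc2, he2⟩ | ⟨hc2, he2⟩ | ⟨hc2, hc2', he2⟩ | ⟨hc2, he2⟩ <;>
      rw [he1, he2] at h <;>
      first
      | omega
      | (have hb := congrArg brIdx h
         have hv := congrArg brVal h
         simp only [brIdx_none, brIdx_some, brVal_none, brVal_some] at hb hv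
         omega)

end CountLemmas

set_option maxHeartbeats 1000000

/-- for a spider that is not a caterpillar (at least three branches of
length at least `2`), the set of all internal (non-leaf) vertices is a multicover, and
its cardinality is `Σ_m (d_m - 1) + 1`. -/
theorem stmt16 (k : ℕ) (hk : 3 ≤ k) (d : Fin k → ℕ) (hd : ∀ i, 1 ≤ d i)
    (hmono : Monotone d)
    (hnc : 3 ≤ (Finset.univ.filter (fun i : Fin k => 2 ≤ d i)).card) :
    IsMulticover (spider k d) (Finset.univ.filter (fun v => ¬ IsSpiderLeaf k d v)) ∧
    (Finset.univ.filter (fun v : SpiderVert k d => ¬ IsSpiderLeaf k d v)).card =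
      (∑ m : Fin k, (d m - 1)) + 1 := by
  constructor
  · -- multicover
    intro v r hr1 hr2
    have htop3 : 2 ≤ d ⟨k - 3, by omega⟩ := spider_top3 hk hmono hnc
    rcases v with _ | ⟨i, j0⟩
    · -- v = none
      have hkk : k - 1 < k := by omega
      have hecc : ecc (spider k d) none ≤ d ⟨k - 1, hkk⟩ := by
        apply Finset.sup_le
        rintro (_ | ⟨i', j'⟩) -
        · simp [SimpleGraph.dist_self]
        · have h1 := spider_dist_up (d := d) i' j'.1 j'.2
          have h2 : d i' ≤ d ⟨k - 1, hkk⟩ := by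
            apply hmono
            have := i'.2
            simp only [Fin.le_def]
            omega
          have h3 := j'.2
          exact le_trans h1 (by omega)
      exact count_none ⟨k - 1, hkk⟩ r (hd _) (le_trans hr2 hecc)
    · -- v = some ⟨i, j0⟩
      set J := (j0 : ℕ) with hJdef
      have hJ : J < d i := j0.2
      have hik := i.2
      have hk1 : k - 1 < k := by omega
      have hk2 : k - 2 < k := by omega
      have hk3 : k - 3 < k := by omega
      set i₁ : Fin k := if (i : ℕ) = k - 1 then ⟨k - 2, hk2⟩ else ⟨k - 1, hk1⟩ with hi1def
      set i₂ : Fin k := if (i : ℕ) = k - 2 ∨ (i : ℕ) = k - 1 then ⟨k - 3, hk3⟩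
        else ⟨k - 2, hk2⟩ with hi2def
      have hi1ne : (i₁ : ℕ) ≠ (i : ℕ) := by
        rw [hi1def]; split_ifs with h <;> simp <;> omega
      have hi2ne : (i₂ : ℕ) ≠ (i : ℕ) := by
        rw [hi2def]; split_ifs with h <;> simp <;> omega
      have hi12ne : (i₂ : ℕ) ≠ (i₁ : ℕ) := by
        rw [hi1def, hi2def]; split_ifs with h1 h2 <;> simp <;> omega
      have hmax : ∀ i' : Fin k, (i' : ℕ) ≠ (i : ℕ) → d i' ≤ d i₁ := by
        intro i' hne
        apply hmono
        have := i'.2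
        rw [hi1def]
        split_ifs with h <;> simp only [Fin.le_def] <;> omega
      have hd1 : 2 ≤ d i₁ := by
        refine le_trans htop3 (hmono ?_)
        rw [hi1def]
        split_ifs with h <;> simp only [Fin.le_def] <;> omega
      have hd2 : 2 ≤ d i₂ := by
        refine le_trans htop3 (hmono ?_)
        rw [hi2def]
        split_ifs with h <;> simp only [Fin.le_def] <;> omega
      have hecc : ecc (spider k d) (some ⟨i, j0⟩) ≤ max (d i - 1 - J) (J + 1 + d i₁) := by
        apply Finset.sup_le
        rintro (_ | ⟨i', j'⟩) -
        · exact le_trans (spider_dist_none i J hJ) (by omega)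
        · by_cases hii : i = i'
          · subst hii
            rcases le_or_gt (j' : ℕ) J with hle | hlt
            · rw [SimpleGraph.dist_comm]
              exact le_trans (spider_dist_seg i J j'.1 hJ hle) (by omega)
            · have hj2 := j'.2
              exact le_trans (spider_dist_seg i j'.1 J j'.2 hlt.le) (by omega)
          · have hj2 := j'.2
            have hm := hmax i' (fun hval => hii (Fin.ext hval.symm))
            exact le_trans (spider_dist_cross i i' J j'.1 hJ j'.2) (by omega)
      have hrE : r ≤ max (d i - 1 - J) (J + 1 + d i₁) := le_trans hr2 hecc
      by_cases hA : r ≤ J + 1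
      · exact count_A i J r hJ hr1 hA
      · by_cases hB : r + J ≤ d i - 1
        · exact count_B1 i J r hJ (by omega) hB
        · exact count_B2leaf i i₁ i₂ J r hJ (by omega) (by omega) hd1 hd2
            hi1ne hi2ne hi12ne
  · -- cardinality
    have hsplit := Finset.card_filter_add_card_filter_not
      (s := (Finset.univ : Finset (SpiderVert k d))) (p := fun v => IsSpiderLeaf k d v)
    have huniv : (Finset.univ : Finset (SpiderVert k d)).card = (∑ m : Fin k, d m) + 1 := by
      simp [Finset.card_univ, Fintype.card_option, Fintype.card_sigma]
    have hleaf : (Finset.univ.filter (fun v => IsSpiderLeaf k d v)).card = k := by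
      have himg : Finset.univ.filter (fun v => IsSpiderLeaf k d v)
          = Finset.univ.image (spiderLeaf k d hd) := by
        ext v
        simp only [Finset.mem_filter, Finset.mem_univ, true_and, Finset.mem_image]
        constructor
        · rintro hv
          match v, hv with
          | some ⟨i, j⟩, hv =>
            refine ⟨i, ?_⟩
            have hv' : (j : ℕ) + 1 = d i := hv
            have : (⟨d i - 1, by have := hd i; omega⟩ : Fin (d i)) = j := by
              apply Fin.ext; simp; omega
            simp [spiderLeaf, this]
        · rintro ⟨i, rfl⟩
          show (d i - 1) + 1 = d i
          have := hd i; omega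
      rw [himg, Finset.card_image_of_injective _ ?_, Finset.card_univ, Fintype.card_fin]
      intro a b hab
      have := congrArg (fun o => Option.map Sigma.fst o) hab
      simpa [spiderLeaf] using this
    have hsum : (∑ m : Fin k, (d m - 1)) + k = ∑ m : Fin k, d m := by
      have h1 : ∀ m : Fin k, d m - 1 + 1 = d m := fun m => by have := hd m; omega
      calc (∑ m : Fin k, (d m - 1)) + k
          = (∑ m : Fin k, (d m - 1)) + ∑ _m : Fin k, 1 := by simp
        _ = ∑ m : Fin k, ((d m - 1) + 1) := by rw [Finset.sum_add_distrib]
        _ = ∑ m : Fin k, d m := Finset.sum_congr rfl (fun m _ => h1 m)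
    omega
end

section
/- Let T = S(d_1,…,d_k) be a spider that is not a caterpillar (i.e., at least three of the d_i are at least 2). Then P_b(T) = M_c(T) = Σ_{m=1}^{k} (d_m − 1) + 1. -/
variable {V : Type*}

open SimpleGraph Finset

variable {k : ℕ} {d : Fin k → ℕ}

lemma adj_none_some {i : Fin k} {j : Fin (d i)} :
    (spider k d).Adj none (some ⟨i, j⟩) ↔ (j : ℕ) = 0 := Iff.rfl

lemma adj_some_some {i i' : Fin k} {j : Fin (d i)} {j' : Fin (d i')} :
    (spider k d).Adj (some ⟨i, j⟩) (some ⟨i', j'⟩) ↔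
      (i : ℕ) = (i' : ℕ) ∧ ((j : ℕ) + 1 = (j' : ℕ) ∨ (j' : ℕ) + 1 = (j : ℕ)) := Iff.rfl

/-- walk from center up to position j+1 on branch i -/
def walkUp (i : Fin k) : (j : ℕ) → (h : j < d i) → (spider k d).Walk none (some ⟨i, ⟨j, h⟩⟩)
  | 0, h => Walk.cons (adj_none_some.2 rfl) Walk.nil
  | j+1, h => (walkUp i j (by omega)).concat
      (adj_some_some.2 ⟨rfl, Or.inl rfl⟩)

lemma walkUp_length (i : Fin k) : ∀ (j : ℕ) (h : j < d i), (walkUp i j h).length = j + 1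
  | 0, h => rfl
  | j+1, h => by rw [walkUp, Walk.length_concat, walkUp_length i j]

def walkDown (i : Fin k) : (n j : ℕ) → (h : j + n < d i) → (h2 : j < d i) →
    (spider k d).Walk (some ⟨i, ⟨j + n, h⟩⟩) (some ⟨i, ⟨j, h2⟩⟩)
  | 0, j, h, h2 => Walk.nil
  | n+1, j, h, h2 => Walk.cons (adj_some_some.2 ⟨rfl, Or.inr rfl⟩) (walkDown i n j (by omega) h2)

lemma walkDown_length (i : Fin k) : ∀ (n j : ℕ) h h2, (walkDown (d := d) i n j h h2).length = n
  | 0, _, _, _ => rfl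
  | n+1, j, h, h2 => by rw [walkDown, Walk.length_cons, walkDown_length i n j]

lemma dist_none_le {i : Fin k} {j : ℕ} (h : j < d i) :
    (spider k d).dist none (some ⟨i, ⟨j, h⟩⟩) ≤ j + 1 := by
  simpa [walkUp_length] using SimpleGraph.dist_le (walkUp i j h)

lemma dist_same_le {i : Fin k} {j j' : ℕ} (h : j < d i) (h' : j' < d i) (hle : j' ≤ j) :
    (spider k d).dist (some ⟨i, ⟨j, h⟩⟩) (some ⟨i, ⟨j', h'⟩⟩) ≤ j - j' := by
  obtain ⟨n, rfl⟩ : ∃ n, j = j' + n := ⟨j - j', by omega⟩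
  simpa [walkDown_length] using SimpleGraph.dist_le (walkDown i n j' h h')

lemma dist_cross_le {i m : Fin k} {j q : ℕ} (h : j < d i) (h' : q < d m) :
    (spider k d).dist (some ⟨i, ⟨j, h⟩⟩) (some ⟨m, ⟨q, h'⟩⟩) ≤ (j + 1) + (q + 1) := by
  have := SimpleGraph.dist_le ((walkUp i j h).reverse.append (walkUp m q h'))
  simpa [walkUp_length] using this

lemma spider_reach (x : SpiderVert k d) : (spider k d).Reachable x none := by
  match x with
  | none => exact Reachable.refl _
  | some ⟨i, j⟩ => exact ⟨(walkUp i (j : ℕ) j.2).reverse⟩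

lemma spider_reach_all (x y : SpiderVert k d) : (spider k d).Reachable x y :=
  (spider_reach x).trans (spider_reach y).symm

/-- signed potential for branch `i` -/
def pot (i : Fin k) : SpiderVert k d → ℤ
  | none => 0
  | some ⟨m, j⟩ => if m = i then (j : ℤ) + 1 else -((j : ℤ) + 1)

lemma pot_lip (i : Fin k) {a b : SpiderVert k d} (hab : (spider k d).Adj a b) :
    pot i a - pot i b ≤ 1 ∧ pot i b - pot i a ≤ 1 := by
  match a, b with
  | none, none => exact hab.elim
  | none, some ⟨m, j⟩ =>
    have hj : (j : ℕ) = 0 := hab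
    simp only [pot]
    split_ifs <;> simp [hj]
  | some ⟨m, j⟩, none =>
    have hj : (j : ℕ) = 0 := hab
    simp only [pot]
    split_ifs <;> simp [hj]
  | some ⟨m, j⟩, some ⟨m', j'⟩ =>
    obtain ⟨hm, hj⟩ := adj_some_some.1 hab
    have : m = m' := Fin.ext hm
    subst this
    simp only [pot]
    split_ifs <;> omega

lemma pot_walk_le (i : Fin k) {x y : SpiderVert k d} (w : (spider k d).Walk x y) :
    pot i x - pot i y ≤ (w.length : ℤ) := by
  induction w with
  | nil => simp
  | @cons a b c hab w ih =>
    have h1 := (pot_lip i hab).1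
    rw [Walk.length_cons]
    push_cast
    omega

lemma pot_le_dist (i : Fin k) (x y : SpiderVert k d) :
    pot i x - pot i y ≤ ((spider k d).dist x y : ℤ) := by
  obtain ⟨w, hw⟩ := (spider_reach_all x y).exists_walk_length_eq_dist
  rw [← hw]; exact pot_walk_le i w

lemma dist_none_ge {a : Fin k} {j : Fin (d a)} :
    (j : ℕ) + 1 ≤ (spider k d).dist none (some ⟨a, j⟩) := by
  have h := pot_le_dist a (some ⟨a, j⟩) none
  rw [SimpleGraph.dist_comm] at h
  have h1 : pot a (some ⟨a, j⟩) = (j : ℤ) + 1 := by simp [pot]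
  have h2 : pot a (none : SpiderVert k d) = 0 := rfl
  rw [h1, h2] at h
  omega

lemma dist_cross_ge {c a : Fin k} (hca : c ≠ a) {q : Fin (d c)} {j : Fin (d a)} :
    (q : ℕ) + 1 + ((j : ℕ) + 1) ≤ (spider k d).dist (some ⟨c, q⟩) (some ⟨a, j⟩) := by
  have h := pot_le_dist a (some ⟨a, j⟩) (some ⟨c, q⟩)
  rw [SimpleGraph.dist_comm] at h
  have h1 : pot a (some ⟨a, j⟩) = (j : ℤ) + 1 := by simp [pot]
  have h2 : pot a (some ⟨c, q⟩) = -((q : ℤ) + 1) := by simp [pot, hca]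
  rw [h1, h2] at h
  omega

lemma dist_le_ecc {V' : Type*} [Fintype V'] (G : SimpleGraph V') (x v : V') :
    G.dist x v ≤ ecc G v := by
  unfold ecc; exact Finset.le_sup (f := fun u => G.dist u v) (Finset.mem_univ x)

lemma ecc_le {V' : Type*} [Fintype V'] (G : SimpleGraph V') {v : V'} {b : ℕ}
    (h : ∀ u, G.dist u v ≤ b) : ecc G v ≤ b := by
  unfold ecc; exact Finset.sup_le fun u _ => h u

/-- Any packing broadcast weight is at most any multicover cardinality. -/
lemma weight_le_card {V' : Type*} [Fintype V'] [DecidableEq V'] {G : SimpleGraph V'}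
    {f : V' → ℕ} {S : Finset V'} (hf : IsPackingBroadcast G f) (hS : IsMulticover G S) :
    ∑ v, f v ≤ S.card := by
  classical
  set T := Finset.univ.filter (fun v => 0 < f v) with hT
  set B : V' → Finset V' := fun v => S.filter (fun u => G.dist u v ≤ f v) with hB
  have h1 : ∑ v, f v = ∑ v ∈ T, f v := by
    rw [hT, Finset.sum_filter_of_ne]
    intro x _ hx; omega
  have h2 : ∀ v ∈ T, f v ≤ (B v).card := by
    intro v hv
    rw [hT, Finset.mem_filter] at hv
    exact hS v (f v) hv.2 (hf.1 v)
  have hdisj : ∀ v ∈ T, ∀ w ∈ T, v ≠ w → Disjoint (B v) (B w) := by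
    intro v hv w hw hvw
    rw [hT, Finset.mem_filter] at hv hw
    rw [Finset.disjoint_left]
    intro u huv huw
    rw [hB, Finset.mem_filter] at huv huw
    exact hvw (hf.2 u ⟨hv.2, huv.2⟩ ⟨hw.2, huw.2⟩)
  calc ∑ v, f v = ∑ v ∈ T, f v := h1
    _ ≤ ∑ v ∈ T, (B v).card := Finset.sum_le_sum h2
    _ = (T.biUnion B).card := (Finset.card_biUnion hdisj).symm
    _ ≤ S.card := Finset.card_le_card (Finset.biUnion_subset.2 fun v _ => Finset.filter_subset _ _)

/-- The broadcast: each leaf broadcasts with power `d i - 1`, except leaf `i₀` with power `d i₀`. -/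
def bc (i₀ : Fin k) : SpiderVert k d → ℕ
  | none => 0
  | some ⟨m, j⟩ => if (j : ℕ) + 1 = d m then (if m = i₀ then d m else d m - 1) else 0

lemma bc_pos {i₀ : Fin k} {x : SpiderVert k d} (hx : 0 < bc i₀ x) :
    ∃ (a : Fin k) (j : Fin (d a)), x = some ⟨a, j⟩ ∧ (j : ℕ) + 1 = d a := by
  match x with
  | none => exact absurd hx (by simp [bc])
  | some ⟨m, j⟩ =>
    refine ⟨m, j, rfl, ?_⟩
    by_contra hne
    simp [bc, hne] at hx

lemma bc_le_val {i₀ a : Fin k} {j : Fin (d a)} : bc i₀ (some ⟨a, j⟩) ≤ d a := by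
  simp only [bc]; split_ifs <;> omega

lemma bc_ne_val {i₀ a : Fin k} {j : Fin (d a)} (h : a ≠ i₀) (hd : ∀ i, 1 ≤ d i) :
    bc i₀ (some ⟨a, j⟩) ≤ d a - 1 := by
  have := hd a
  simp only [bc, if_neg h]; split_ifs <;> omega

lemma bc_packing (hd : ∀ i, 1 ≤ d i) (i₀ : Fin k) :
    IsPackingBroadcast (spider k d) (bc i₀) := by
  constructor
  · -- broadcast
    intro v
    match v with
    | none => simp [bc, ecc]
    | some ⟨m, j⟩ =>
      by_cases hleaf : (j : ℕ) + 1 = d m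
      · refine le_trans bc_le_val (le_trans ?_ (dist_le_ecc _ none _))
        have h1 : (j : ℕ) + 1 ≤ (spider k d).dist none (some ⟨m, j⟩) := dist_none_ge
        omega
      · simp [bc, hleaf]
  · -- packing
    intro u v hv w hw
    simp only [Set.mem_setOf_eq, Hears] at hv hw
    obtain ⟨a, ja, rfl, hja⟩ := bc_pos hv.1
    obtain ⟨b, jb, rfl, hjb⟩ := bc_pos hw.1
    by_cases hab : a = b
    · subst hab
      have : ja = jb := Fin.ext (by omega)
      rw [this]
    · exfalso
      have key : ∀ (c e : Fin k) (jc : Fin (d c)) (je : Fin (d e)), c ≠ e →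
          (je : ℕ) + 1 = d e →
          (spider k d).dist u (some ⟨e, je⟩) ≤ bc i₀ (some ⟨e, je⟩) → u ≠ none →
          ∃ (q : Fin (d e)), u = some ⟨e, q⟩ := by
        intro c e jc je hce hje hdist hun
        match u, hun with
        | some ⟨x, q⟩, _ =>
          by_cases hxe : x = e
          · subst hxe; exact ⟨q, rfl⟩
          · exfalso
            have h1 : (q : ℕ) + 1 + ((je : ℕ) + 1) ≤ (spider k d).dist (some ⟨x, q⟩) (some ⟨e, je⟩) :=
              dist_cross_ge hxe
            have h2 : bc i₀ (some ⟨e, je⟩) ≤ d e := bc_le_val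
            omega
      by_cases hun : u = none
      · -- u is the center: both a and b must equal i₀
        subst hun
        have ha : a = i₀ := by
          by_contra hne
          have h1 : (ja : ℕ) + 1 ≤ (spider k d).dist none (some ⟨a, ja⟩) := dist_none_ge
          have h2 := bc_ne_val (i₀ := i₀) (j := ja) hne hd
          have := hv.2
          omega
        have hb : b = i₀ := by
          by_contra hne
          have h1 : (jb : ℕ) + 1 ≤ (spider k d).dist none (some ⟨b, jb⟩) := dist_none_ge
          have h2 := bc_ne_val (i₀ := i₀) (j := jb) hne hd
          have := hw.2
          omega
        exact hab (ha.trans hb.symm)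
      · obtain ⟨qa, hqa⟩ := key b a jb ja (Ne.symm hab) hja hv.2 hun
        obtain ⟨qb, hqb⟩ := key a b ja jb hab hjb hw.2 hun
        rw [hqa] at hqb
        exact hab (congrArg (fun o => o.elim a (·.1)) hqb)

lemma bc_sum (hd : ∀ i, 1 ≤ d i) (i₀ : Fin k) :
    ∑ x : SpiderVert k d, bc i₀ x = (∑ m : Fin k, (d m - 1)) + 1 := by
  rw [Fintype.sum_option]
  have h0 : bc (d := d) i₀ none = 0 := rfl
  rw [h0, zero_add, ← Finset.univ_sigma_univ, Finset.sum_sigma]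
  have hinner : ∀ i : Fin k, ∑ j : Fin (d i), bc i₀ (some ⟨i, j⟩)
      = (d i - 1) + (if i = i₀ then 1 else 0) := by
    intro i
    have hlast : (⟨d i - 1, by have := hd i; omega⟩ : Fin (d i)) ∈ Finset.univ := Finset.mem_univ _
    rw [Finset.sum_eq_single_of_mem _ hlast]
    · have hdi := hd i
      show (if (d i - 1) + 1 = d i then (if i = i₀ then d i else d i - 1) else 0) = _
      rw [if_pos (by omega)]
      split_ifs <;> omega
    · intro j _ hj
      simp only [bc]
      rw [if_neg]
      intro hcon
      exact hj (Fin.ext (show (j : ℕ) = d i - 1 by omega))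
  rw [Finset.sum_congr rfl (fun i _ => hinner i), Finset.sum_add_distrib,
    Finset.sum_ite_eq' Finset.univ i₀ (fun _ => 1)]
  simp

lemma some_inj_vals {i i' : Fin k} {a : Fin (d i)} {b : Fin (d i')}
    (h : (some ⟨i, a⟩ : SpiderVert k d) = some ⟨i', b⟩) : i = i' ∧ (a : ℕ) = (b : ℕ) := by
  constructor
  · have := congrArg (fun o : SpiderVert k d => o.elim i (fun s => s.1)) h
    simpa using this
  · have := congrArg (fun o : SpiderVert k d => o.elim 0 (fun s => (s.2 : ℕ))) h
    simpa using this

/-- non-leaf indicator -/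
def nlB : SpiderVert k d → Bool
  | none => true
  | some ⟨i, j⟩ => decide ((j : ℕ) + 1 < d i)

/-- The multicover: all non-leaf vertices. -/
def S0 : Finset (SpiderVert k d) := Finset.univ.filter (fun x => nlB x = true)

lemma mem_S0_none : (none : SpiderVert k d) ∈ S0 := by
  rw [S0, Finset.mem_filter]; exact ⟨Finset.mem_univ _, rfl⟩

lemma mem_S0_some {i : Fin k} {j : Fin (d i)} (h : (j : ℕ) + 1 < d i) :
    (some ⟨i, j⟩ : SpiderVert k d) ∈ S0 := by
  rw [S0, Finset.mem_filter]; exact ⟨Finset.mem_univ _, decide_eq_true h⟩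

lemma S0_card (hd : ∀ i, 1 ≤ d i) : (S0 (d := d)).card = (∑ m : Fin k, (d m - 1)) + 1 := by
  rw [S0, Finset.card_filter, Fintype.sum_option]
  have h0 : (if nlB (none : SpiderVert k d) = true then 1 else 0) = 1 := rfl
  rw [h0, ← Finset.univ_sigma_univ, Finset.sum_sigma]
  have hinner : ∀ i : Fin k,
      (∑ j : Fin (d i), if nlB (d := d) (some ⟨i, j⟩) = true then 1 else 0) = d i - 1 := by
    intro i
    have : ∀ j : Fin (d i), (if nlB (d := d) (some ⟨i, j⟩) = true then 1 else 0)
        = if (j : ℕ) + 1 < d i then 1 else 0 := by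
      intro j; simp [nlB]
    rw [Finset.sum_congr rfl (fun j _ => this j),
      Fin.sum_univ_eq_sum_range (fun t => if t + 1 < d i then 1 else 0)]
    obtain ⟨mm, hmm⟩ : ∃ mm, d i = mm + 1 := ⟨d i - 1, by have := hd i; omega⟩
    rw [hmm, Finset.sum_range_succ]
    have h2 : ∀ t ∈ Finset.range mm, (if t + 1 < mm + 1 then 1 else 0) = 1 := by
      intro t ht; rw [if_pos (by have := Finset.mem_range.1 ht; omega)]
    rw [Finset.sum_congr rfl h2]
    simp
  rw [Finset.sum_congr rfl (fun i _ => hinner i)]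
  omega

lemma dist_same_le2 {i : Fin k} {x y n : ℕ} (hx : x < d i) (hy : y < d i)
    (h1 : x ≤ y + n) (h2 : y ≤ x + n) :
    (spider k d).dist (some ⟨i, ⟨x, hx⟩⟩) (some ⟨i, ⟨y, hy⟩⟩) ≤ n := by
  rcases le_total y x with hle | hle
  · exact le_trans (dist_same_le hx hy hle) (by omega)
  · rw [SimpleGraph.dist_comm]
    exact le_trans (dist_same_le hy hx hle) (by omega)

lemma S0_multicover (hk : 3 ≤ k) (hd : ∀ i, 1 ≤ d i) (hmono : Monotone d)
    (hnc : 3 ≤ (Finset.univ.filter (fun i : Fin k => 2 ≤ d i)).card) :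
    IsMulticover (spider k d) S0 := by
  intro v r hr1 hr2
  have key : ∀ g : Fin r → SpiderVert k d,
      (∀ t, g t ∈ S0.filter (fun u => (spider k d).dist u v ≤ r)) →
      Function.Injective g →
      r ≤ (S0.filter (fun u => (spider k d).dist u v ≤ r)).card := by
    intro g hmem hinj
    calc r = (Finset.univ : Finset (Fin r)).card := by simp
      _ ≤ _ := Finset.card_le_card_of_injOn g (fun t _ => hmem t) hinj.injOn
  match v with
  | none =>
    set imax : Fin k := ⟨k - 1, by omega⟩ with himax
    have hdmax : ∀ c : Fin k, d c ≤ d imax := fun c => hmono (by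
      rw [Fin.le_def]; simp [himax]; omega)
    have hrmax : r ≤ d imax := by
      refine hr2.trans (ecc_le _ ?_)
      intro u
      match u with
      | none => rw [SimpleGraph.dist_self]; exact Nat.zero_le _
      | some ⟨c, q⟩ =>
        rw [SimpleGraph.dist_comm]
        have h1 := dist_none_le (d := d) q.2
        have h2 := hdmax c
        have h3 := q.2
        calc (spider k d).dist none (some ⟨c, q⟩) ≤ (q : ℕ) + 1 := by
              have := dist_none_le (d := d) q.2
              convert this using 3 <;> exact (Fin.eta _ _).symm
          _ ≤ d imax := by omega
    refine key (fun t => if h0 : (t : ℕ) = 0 then none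
      else some ⟨imax, ⟨(t : ℕ) - 1, by have := t.isLt; omega⟩⟩) ?_ ?_
    · intro t
      rw [Finset.mem_filter]
      split_ifs with h0
      · exact ⟨mem_S0_none, by rw [SimpleGraph.dist_self]; exact Nat.zero_le _⟩
      · have ht := t.isLt
        constructor
        · exact mem_S0_some (show (t : ℕ) - 1 + 1 < d imax by omega)
        · rw [SimpleGraph.dist_comm]
          have := dist_none_le (d := d) (i := imax)
            (j := (t : ℕ) - 1) (by omega)
          omega
    · intro t₁ t₂ heq
      dsimp only at heq
      by_cases h1 : (t₁ : ℕ) = 0 <;> by_cases h2 : (t₂ : ℕ) = 0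
      · exact Fin.ext (by omega)
      · rw [dif_pos h1, dif_neg h2] at heq
        cases heq
      · rw [dif_neg h1, dif_pos h2] at heq
        cases heq
      · rw [dif_neg h1, dif_neg h2] at heq
        obtain ⟨hfst, hsnd⟩ := some_inj_vals heq
        have hv : (t₁ : ℕ) - 1 = (t₂ : ℕ) - 1 := hsnd
        exact Fin.ext (by omega)
  | some ⟨i, ⟨j, hj⟩⟩ =>
    by_cases hA : j + r + 1 ≤ d i
    · -- ball fits above `v` inside the branch
      refine key (fun t => some ⟨i, ⟨j + (t : ℕ), by have := t.isLt; omega⟩⟩) ?_ ?_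
      · intro t
        have ht := t.isLt
        rw [Finset.mem_filter]
        exact ⟨mem_S0_some (show j + (t : ℕ) + 1 < d i by omega),
          dist_same_le2 _ _ (by omega) (by omega)⟩
      · intro t₁ t₂ heq
        obtain ⟨hfst, hsnd⟩ := some_inj_vals heq
        have hv : j + (t₁ : ℕ) = j + (t₂ : ℕ) := hsnd
        exact Fin.ext (by omega)
    · by_cases hB : r ≤ j
      · -- ball fits below `v` inside the branch
        refine key (fun t => some ⟨i, ⟨j - 1 - (t : ℕ), by omega⟩⟩) ?_ ?_
        · intro t
          have ht := t.isLt
          rw [Finset.mem_filter]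
          exact ⟨mem_S0_some (show j - 1 - (t : ℕ) + 1 < d i by omega),
            dist_same_le2 _ _ (by omega) (by omega)⟩
        · intro t₁ t₂ heq
          obtain ⟨hfst, hsnd⟩ := some_inj_vals heq
          have hv : j - 1 - (t₁ : ℕ) = j - 1 - (t₂ : ℕ) := hsnd
          have h1 := t₁.isLt
          have h2 := t₂.isLt
          exact Fin.ext (by omega)
      · -- the hard case: the ball covers the whole branch below and above
        -- the largest other branch
        have hne : (Finset.univ.erase i).Nonempty := by
          rw [← Finset.card_pos, Finset.card_erase_of_mem (Finset.mem_univ i)]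
          simp only [Finset.card_univ, Fintype.card_fin]
          omega
        set M : ℕ := (Finset.univ.erase i).sup d with hM
        obtain ⟨m, hm_mem, hm_eq⟩ := Finset.exists_mem_eq_sup _ hne d
        have hm_ne : m ≠ i := Finset.ne_of_mem_erase hm_mem
        -- a third branch of length ≥ 2
        obtain ⟨m', hm'⟩ : ∃ m' : Fin k, m' ≠ i ∧ m' ≠ m ∧ 2 ≤ d m' := by
          have hcard : 1 ≤ ((Finset.univ.filter (fun c : Fin k => 2 ≤ d c)) \ {i, m}).card := by
            have h1 := Finset.le_card_sdiff ({i, m} : Finset (Fin k))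
              (Finset.univ.filter (fun c : Fin k => 2 ≤ d c))
            have h2 : ({i, m} : Finset (Fin k)).card ≤ 2 :=
              le_trans (Finset.card_insert_le _ _) (by simp)
            omega
          have hpos : 0 < ((Finset.univ.filter (fun c : Fin k => 2 ≤ d c)) \ {i, m}).card := hcard
          obtain ⟨m', hm'⟩ := Finset.card_pos.1 hpos
          rw [Finset.mem_sdiff, Finset.mem_filter, Finset.mem_insert, Finset.mem_singleton] at hm'
          push_neg at hm'
          exact ⟨m', hm'.2.1, hm'.2.2, hm'.1.2⟩
        have hdm : 1 ≤ d m := hd m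
        have hdm' : 2 ≤ d m' := hm'.2.2
        have hmM : d m = M := by rw [hM, hm_eq]
        have hrC : r ≤ d i + d m := by
          rw [hmM, hM]
          refine hr2.trans (ecc_le _ ?_)
          intro u
          match u with
          | none =>
            have := dist_none_le (d := d) hj
            omega
          | some ⟨c, ⟨q, hq⟩⟩ =>
            by_cases hci : c = i
            · subst hci
              have := dist_same_le2 (d := d) hq hj (n := d c) (by omega) (by omega)
              omega
            · have h1 := dist_cross_le (d := d) hq hj
              have h2 : d c ≤ M := Finset.le_sup (Finset.mem_erase.2 ⟨hci, Finset.mem_univ c⟩)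
              omega
        refine key (fun t =>
          if h1 : (t : ℕ) + 2 ≤ d i then some ⟨i, ⟨(t : ℕ), by omega⟩⟩
          else if h2 : (t : ℕ) + 1 = d i then none
          else if h3 : (t : ℕ) + 2 ≤ d i + d m then
            some ⟨m, ⟨(t : ℕ) - d i, by omega⟩⟩
          else some ⟨m', ⟨0, by omega⟩⟩) ?_ ?_
        · intro t
          have ht := t.isLt
          rw [Finset.mem_filter]
          split_ifs with h1 h2 h3
          · exact ⟨mem_S0_some (show (t : ℕ) + 1 < d i by omega),
              dist_same_le2 _ _ (by omega) (by omega)⟩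
          · refine ⟨mem_S0_none, ?_⟩
            have := dist_none_le (d := d) hj
            omega
          · refine ⟨mem_S0_some (show (t : ℕ) - d i + 1 < d m by omega), ?_⟩
            have := dist_cross_le (d := d) (show (t : ℕ) - d i < d m by omega) hj
            omega
          · refine ⟨mem_S0_some (show (0 : ℕ) + 1 < d m' by omega), ?_⟩
            have := dist_cross_le (d := d) (show (0 : ℕ) < d m' by omega) hj
            omega
        · intro t₁ t₂ heq
          have hlt₁ := t₁.isLt
          have hlt₂ := t₂.isLt
          dsimp only at heq
          by_cases p1 : (t₁ : ℕ) + 2 ≤ d i <;> by_cases q1 : (t₂ : ℕ) + 2 ≤ d i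
          · rw [dif_pos p1, dif_pos q1] at heq
            obtain ⟨hfst, hsnd⟩ := some_inj_vals heq
            have hv : (t₁ : ℕ) = (t₂ : ℕ) := hsnd
            exact Fin.ext hv
          · rw [dif_pos p1, dif_neg q1] at heq
            by_cases q2 : (t₂ : ℕ) + 1 = d i
            · rw [dif_pos q2] at heq
              cases heq
            · rw [dif_neg q2] at heq
              split_ifs at heq with q3
              · obtain ⟨hfst, hsnd⟩ := some_inj_vals heq
                exact absurd hfst hm_ne.symm
              · obtain ⟨hfst, hsnd⟩ := some_inj_vals heq
                exact absurd hfst hm'.1.symm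
          · rw [dif_neg p1, dif_pos q1] at heq
            by_cases p2 : (t₁ : ℕ) + 1 = d i
            · rw [dif_pos p2] at heq
              cases heq
            · rw [dif_neg p2] at heq
              split_ifs at heq with p3
              · obtain ⟨hfst, hsnd⟩ := some_inj_vals heq
                exact absurd hfst hm_ne
              · obtain ⟨hfst, hsnd⟩ := some_inj_vals heq
                exact absurd hfst hm'.1
          · rw [dif_neg p1, dif_neg q1] at heq
            by_cases p2 : (t₁ : ℕ) + 1 = d i <;> by_cases q2 : (t₂ : ℕ) + 1 = d i
            · exact Fin.ext (by omega)
            · rw [dif_pos p2, dif_neg q2] at heq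
              split_ifs at heq <;> exact Option.noConfusion heq
            · rw [dif_neg p2, dif_pos q2] at heq
              split_ifs at heq <;> exact Option.noConfusion heq
            · rw [dif_neg p2, dif_neg q2] at heq
              by_cases p3 : (t₁ : ℕ) + 2 ≤ d i + d m <;> by_cases q3 : (t₂ : ℕ) + 2 ≤ d i + d m
              · rw [dif_pos p3, dif_pos q3] at heq
                obtain ⟨hfst, hsnd⟩ := some_inj_vals heq
                have hv : (t₁ : ℕ) - d i = (t₂ : ℕ) - d i := hsnd
                exact Fin.ext (by omega)
              · rw [dif_pos p3, dif_neg q3] at heq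
                obtain ⟨hfst, hsnd⟩ := some_inj_vals heq
                exact absurd hfst (hm'.2.1).symm
              · rw [dif_neg p3, dif_pos q3] at heq
                obtain ⟨hfst, hsnd⟩ := some_inj_vals heq
                exact absurd hfst hm'.2.1
              · exact Fin.ext (by omega)

theorem stmt17' (k : ℕ) (hk : 3 ≤ k) (d : Fin k → ℕ) (hd : ∀ i, 1 ≤ d i)
    (hmono : Monotone d)
    (hnc : 3 ≤ (Finset.univ.filter (fun i : Fin k => 2 ≤ d i)).card) :
    Pb (spider k d) = Mc (spider k d) ∧
    Pb (spider k d) = (∑ m : Fin k, (d m - 1)) + 1 := by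
  classical
  set W : ℕ := (∑ m : Fin k, (d m - 1)) + 1 with hW
  set i₀ : Fin k := ⟨0, by omega⟩ with hi₀
  have hpack := bc_packing (d := d) hd i₀
  have hsum := bc_sum (d := d) hd i₀
  have hcov := S0_multicover hk hd hmono hnc
  have hcard := S0_card (d := d) hd
  have hmemP : W ∈ {w | ∃ f, IsPackingBroadcast (spider k d) f ∧ w = ∑ v, f v} :=
    ⟨bc i₀, hpack, hsum.symm⟩
  have hbdd : ∀ x ∈ {w | ∃ f, IsPackingBroadcast (spider k d) f ∧ w = ∑ v, f v}, x ≤ W := by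
    rintro x ⟨f, hf, rfl⟩
    exact (weight_le_card hf hcov).trans_eq hcard
  have hPb : Pb (spider k d) = W := by
    unfold Pb
    exact le_antisymm (csSup_le ⟨W, hmemP⟩ hbdd) (le_csSup ⟨W, hbdd⟩ hmemP)
  have hMc : Mc (spider k d) = W := by
    unfold Mc
    refine le_antisymm (Nat.sInf_le ⟨S0, hcov, hcard.symm⟩) ?_
    obtain ⟨S', hS', hSc⟩ :=
      Nat.sInf_mem (s := {n | ∃ S : Finset (SpiderVert k d), IsMulticover (spider k d) S ∧ n = S.card})
        ⟨S0.card, S0, hcov, rfl⟩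
    rw [hSc, hW, ← hsum]
    exact weight_le_card hpack hS'
  exact ⟨hPb.trans hMc.symm, hPb⟩
/-- for a spider that is not a caterpillar (at least three branches of
length at least `2`), `P_b(T) = M_c(T) = Σ_m (d_m - 1) + 1`. -/
theorem stmt17 (k : ℕ) (hk : 3 ≤ k) (d : Fin k → ℕ) (hd : ∀ i, 1 ≤ d i)
    (hmono : Monotone d)
    (hnc : 3 ≤ (Finset.univ.filter (fun i : Fin k => 2 ≤ d i)).card) :
    Pb (spider k d) = Mc (spider k d) ∧
    Pb (spider k d) = (∑ m : Fin k, (d m - 1)) + 1 := by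
  exact stmt17' k hk d hd hmono hnc
end
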